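/- Let Ω ⊂ ℂⁿ be a bounded strictly pseudoconvex domain, ψ ∈ C^{0,α}(∂Ω), φ ∈ PSH(Ω) ∩ C^{0,α}(closure Ω) with φ = 0 on ∂Ω, and suppose the solution u of the Dirichlet problem satisfies φ + h ≤ u ≤ h on Ω, where h is the Perron–Bremermann envelope of ψ (which is plurisubharmonic and α-Hölder on the closure with h = ψ on ∂Ω). Define u_δ(z) = sup_{|ζ|≤δ} u(z+ζ) for z ∈ Ω_δ. Then for 0 < δ ≤ ε and z ∈ closure(Ω_δ) ∖ Ω_ε, one has u_δ(z) ≤ u(z) + C ε^α with C depending only on the Hölder norms of h and φ. -/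

import Mathlib

open MeasureTheory Complex Topology Filter
open scoped ENNReal NNReal Real

noncomputable section

/-- ℂⁿ as a Euclidean space. -/
abbrev Cn (n : ℕ) := EuclideanSpace ℂ (Fin n)

instance {n : ℕ} : MeasurableSpace (Cn n) := WithLp.measurableSpace 2 (Fin n → ℂ)
instance {n : ℕ} : BorelSpace (Cn n) := PiLp.borelSpace 2
instance {n : ℕ} : MeasureSpace (Cn n) := ⟨(volume : Measure (Fin n → ℂ)).map (MeasurableEquiv.toLp 2 (Fin n → ℂ))⟩

/-- The `j`-th standard basis vector of ℂⁿ. -/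
def basisVec {n : ℕ} (j : Fin n) : Cn n := EuclideanSpace.single j 1

/-- Plurisubharmonicity on an open set: upper semicontinuity together with the
sub-mean value inequality on every complex line. -/
def PSHOn {n : ℕ} (u : Cn n → ℝ) (Ω : Set (Cn n)) : Prop :=
  UpperSemicontinuousOn u Ω ∧
  ∀ z ∈ Ω, ∀ w : Cn n, ∀ r : ℝ, 0 < r →
    (∀ t : ℂ, ‖t‖ ≤ r → z + t • w ∈ Ω) →
    u z ≤ (2 * Real.pi)⁻¹ *
      ∫ θ in (0:ℝ)..(2 * Real.pi), u (z + ((r : ℂ) * Complex.exp (θ * Complex.I)) • w)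

/-- The complex Hessian `∂²f/∂z_j∂z̄_k` of a real-valued function, expressed through the
real second Fréchet derivative. -/
def complexHessian {n : ℕ} (f : Cn n → ℝ) (z : Cn n) (j k : Fin n) : ℂ :=
  (((iteratedFDeriv ℝ 2 f z ![basisVec j, basisVec k] +
      iteratedFDeriv ℝ 2 f z ![Complex.I • basisVec j, Complex.I • basisVec k] : ℝ) : ℂ)
    + Complex.I *
      ((iteratedFDeriv ℝ 2 f z ![Complex.I • basisVec j, basisVec k] -
        iteratedFDeriv ℝ 2 f z ![basisVec j, Complex.I • basisVec k] : ℝ) : ℂ)) / 4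

/-- The mixed determinant of `n` complex `n × n` matrices (column `j` is taken from the
matrix `A (σ j)`). -/
def mixedDet {n : ℕ} (A : Fin n → Matrix (Fin n) (Fin n) ℂ) : ℂ :=
  (n.factorial : ℂ)⁻¹ *
    ∑ σ : Equiv.Perm (Fin n), Matrix.det (Matrix.of fun i j => A (σ j) i j)

/-- An interface for the Bedford–Taylor mixed Monge–Ampère operator:
`mamix Ω u` represents the positive measure `dd^c u 0 ∧ ⋯ ∧ dd^c u (n-1)` on `Ω`,
defined for (locally) bounded plurisubharmonic inputs.  It is required to be symmetric,
to agree with the classical mixed Monge–Ampère density for `C²` plurisubharmonic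
functions, and to be continuous along uniformly bounded decreasing sequences; these
properties characterize the Bedford–Taylor operator. -/
structure BedfordTaylor (n : ℕ) where
  mamix : Set (Cn n) → (Fin n → (Cn n → ℝ)) → Measure (Cn n)
  symm : ∀ (Ω : Set (Cn n)) (u : Fin n → (Cn n → ℝ)) (σ : Equiv.Perm (Fin n)),
    mamix Ω (u ∘ σ) = mamix Ω u
  smooth_eq : ∀ (Ω : Set (Cn n)), IsOpen Ω → ∀ u : Fin n → (Cn n → ℝ),
    (∀ i, ContDiff ℝ 2 (u i)) → (∀ i, PSHOn (u i) Ω) →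
    mamix Ω u = (volume.restrict Ω).withDensity fun z =>
      ENNReal.ofReal ((4 ^ n * n.factorial : ℝ) *
        (mixedDet fun i => complexHessian (u i) z).re)
  cont : ∀ (Ω : Set (Cn n)), IsOpen Ω →
    ∀ (u : Fin n → ℕ → (Cn n → ℝ)) (v : Fin n → (Cn n → ℝ)),
    (∀ i k, PSHOn (u i k) Ω) → (∀ i, PSHOn (v i) Ω) →
    (∀ i k z, u i (k + 1) z ≤ u i k z) →
    (∀ i, ∀ z ∈ Ω, Tendsto (fun k => u i k z) atTop (nhds (v i z))) →
    (∀ i, ∃ M, ∀ k z, z ∈ Ω → |u i k z| ≤ M) →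
    ∀ f : Cn n → ℝ, Continuous f → HasCompactSupport f → tsupport f ⊆ Ω →
      Tendsto (fun k => ∫ z, f z ∂(mamix Ω fun i => u i k)) atTop
        (nhds (∫ z, f z ∂(mamix Ω v)))

/-- The Monge–Ampère measure `(dd^c u)ⁿ` of `u` on `Ω`. -/
def BedfordTaylor.ma {n : ℕ} (BT : BedfordTaylor n) (Ω : Set (Cn n)) (u : Cn n → ℝ) :
    Measure (Cn n) :=
  BT.mamix Ω fun _ => u

/-- The Bedford–Taylor relative capacity of a set `E` in `Ω`. -/
def BedfordTaylor.cap {n : ℕ} (BT : BedfordTaylor n) (Ω E : Set (Cn n)) : ℝ≥0∞ :=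
  ⨆ w : {w : Cn n → ℝ // PSHOn w Ω ∧ ∀ z ∈ Ω, w z ∈ Set.Icc (0:ℝ) 1},
    BT.ma Ω w.1 E

/-- `ρ` is a `C²` strictly plurisubharmonic defining function for the bounded domain `Ω`,
normalized so that `dd^c ρ ≥ β` (the standard Kähler form). -/
def IsSpscDefining {n : ℕ} (Ω : Set (Cn n)) (ρ : Cn n → ℝ) : Prop :=
  IsOpen Ω ∧ Bornology.IsBounded Ω ∧ Ω = {z | ρ z < 0} ∧ ContDiff ℝ 2 ρ ∧
  (∀ z ∈ frontier Ω, fderiv ℝ ρ z ≠ 0) ∧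
  (∀ z : Cn n, ∀ w : Cn n,
    (‖w‖ : ℝ) ^ 2 ≤ (∑ j, ∑ k, complexHessian ρ z j k * w j * (starRingEnd ℂ) (w k)).re)


/-- Hölder continuity on a set, in terms of `dist`. -/
lemma holderOnWith_dist_le {X : Type*} [PseudoMetricSpace X] {C r : ℝ≥0} {f : X → ℝ}
    {s : Set X} (h : HolderOnWith C r f s) {x y : X} (hx : x ∈ s) (hy : y ∈ s)
    {d : ℝ} (hd : dist x y ≤ d) : dist (f x) (f y) ≤ C * d ^ (r : ℝ) := by
  lift d to ℝ≥0 using dist_nonneg.trans hd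
  rw [dist_nndist] at hd ⊢
  norm_cast at hd ⊢
  rw [← ENNReal.coe_le_coe, ← edist_nndist, ENNReal.coe_mul,
    ENNReal.coe_rpow_of_nonneg _ r.coe_nonneg]
  apply h.edist_le_of_le hx hy
  rwa [edist_nndist, ENNReal.coe_le_coe]

/-- Boundary Hölder estimate (Lemma 4.1): if `h + φ ≤ u ≤ h` on the closure of `Ω`,
with `h` the (α-Hölder, plurisubharmonic, maximal) Perron–Bremermann envelope of `ψ` and
`φ` an α-Hölder plurisubharmonic function vanishing on `∂Ω`, then there exists `C`
(depending only on the Hölder norms of `h` and `φ`) such that for `0 < δ ≤ ε` and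
`z ∈ closure(Ω_δ) ∖ Ω_ε`, `u_δ(z) = sup_{|ζ| ≤ δ} u(z+ζ) ≤ u(z) + C ε^α`. -/
theorem boundary_holder_estimate {n : ℕ} (hn : 0 < n)
    (Ω : Set (Cn n)) (ρ : Cn n → ℝ) (hΩ : IsSpscDefining Ω ρ) (hne : Ω.Nonempty)
    (φ h u ψ : Cn n → ℝ)
    (α : ℝ≥0) (hα0 : 0 < α) (hα1 : (α : ℝ) ≤ 1) (Cφ Ch : ℝ≥0)
    (hφH : HolderOnWith Cφ α φ (closure Ω)) (hφpsh : PSHOn φ Ω)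
    (hφ0 : ∀ z ∈ frontier Ω, φ z = 0)
    (hhH : HolderOnWith Ch α h (closure Ω)) (hhpsh : PSHOn h Ω)
    (hhψ : ∀ z ∈ frontier Ω, h z = ψ z)
    (hsq : ∀ z ∈ closure Ω, h z + φ z ≤ u z ∧ u z ≤ h z) :
    ∃ C : ℝ, 0 < C ∧ ∀ δ ε : ℝ, 0 < δ → δ ≤ ε →
      ∀ z ∈ closure {w ∈ Ω | δ < Metric.infDist w (frontier Ω)} \
            {w ∈ Ω | ε < Metric.infDist w (frontier Ω)},
        ∀ ζ : Cn n, ‖ζ‖ ≤ δ → u (z + ζ) ≤ u z + C * ε ^ (α : ℝ) := by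
  obtain ⟨hopen, hbdd, -, -, -, -⟩ := hΩ
  refine ⟨(Cφ : ℝ) + (Ch : ℝ) + 1, by positivity, ?_⟩
  intro δ ε hδ hδε z hz ζ hζ
  obtain ⟨hz1, hz2⟩ := hz
  set F := frontier Ω with hF
  -- z is in the closure of Ω and at distance ≥ δ from the boundary
  have hzΩcl : z ∈ closure Ω := by
    have : closure {w ∈ Ω | δ < Metric.infDist w F} ⊆ closure Ω :=
      closure_mono fun w hw => hw.1
    exact this hz1
  have hinf : δ ≤ Metric.infDist z F := by
    have hcl : IsClosed {w : Cn n | δ ≤ Metric.infDist w F} :=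
      isClosed_le continuous_const (Metric.continuous_infDist_pt F)
    exact closure_minimal (fun w hw => le_of_lt hw.2) hcl hz1
  -- the boundary is nonempty
  have hFne : F.Nonempty := by
    rcases Set.eq_empty_or_nonempty F with hFe | hFne
    · rw [hFe, Metric.infDist_empty] at hinf; linarith
    · exact hFne
  -- z lies in Ω
  have hzΩ : z ∈ Ω := by
    by_contra hzn
    have hzF : z ∈ F := by
      rw [hF, frontier, hopen.interior_eq]
      exact ⟨hzΩcl, hzn⟩
    have : Metric.infDist z F = 0 := Metric.infDist_zero_of_mem hzF
    linarith
  -- z is within ε of the boundary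
  have hinfε : Metric.infDist z F ≤ ε := by
    by_contra hc
    exact hz2 ⟨hzΩ, lt_of_not_ge hc⟩
  -- pick a closest boundary point y
  have hFcpt : IsCompact F :=
    Metric.isCompact_of_isClosed_isBounded isClosed_frontier
      (hbdd.closure.subset frontier_subset_closure)
  obtain ⟨y, hyF, hy⟩ := hFcpt.exists_infDist_eq_dist hFne z
  have hdzy : dist z y ≤ ε := by rw [← hy]; exact hinfε
  -- points of the open δ-ball around z avoid the boundary, hence lie in Ω
  have hnotF : ∀ w ∈ Metric.ball z δ, w ∉ F := by
    intro w hw hwF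
    have : Metric.infDist z F ≤ dist z w := Metric.infDist_le_dist_of_mem hwF
    rw [Metric.mem_ball, dist_comm] at hw
    linarith
  have hball : Metric.ball z δ ⊆ Ω := by
    by_contra hc
    obtain ⟨y', hy'b, hy'n⟩ := Set.not_subset.mp hc
    have hy'ncl : y' ∉ closure Ω := by
      intro hmem
      exact hnotF y' hy'b (by rw [hF, frontier, hopen.interior_eq]; exact ⟨hmem, hy'n⟩)
    have hpc := (convex_ball z δ).isPreconnected
    have hcover : Metric.ball z δ ⊆ Ω ∪ (closure Ω)ᶜ := by
      intro w hw
      by_cases hwcl : w ∈ closure Ω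
      · left
        by_contra hwn
        exact hnotF w hw (by rw [hF, frontier, hopen.interior_eq]; exact ⟨hwcl, hwn⟩)
      · exact Or.inr hwcl
    obtain ⟨w, -, hw1, hw2⟩ := hpc Ω (closure Ω)ᶜ hopen isClosed_closure.isOpen_compl hcover
      ⟨z, Metric.mem_ball_self hδ, hzΩ⟩ ⟨y', hy'b, hy'ncl⟩
    exact hw2 (subset_closure hw1)
  -- hence z + ζ lies in the closure of Ω
  have hzζcl : z + ζ ∈ closure Ω := by
    have h1 : z + ζ ∈ Metric.closedBall z δ := by
      rw [Metric.mem_closedBall, dist_eq_norm]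
      simpa using hζ
    rw [← closure_ball z hδ.ne'] at h1
    exact (closure_mono hball) h1
  -- Hölder estimates
  have hεα : (0:ℝ) ≤ ε ^ (α : ℝ) := Real.rpow_nonneg (hδ.le.trans hδε) _
  have hdz : dist (z + ζ) z ≤ ε := by
    rw [dist_eq_norm]
    simpa using hζ.trans hδε
  have hH1 : |h (z + ζ) - h z| ≤ (Ch : ℝ) * ε ^ (α : ℝ) := by
    have := holderOnWith_dist_le hhH hzζcl hzΩcl hdz
    rwa [Real.dist_eq] at this
  have hH2 : |φ z - φ y| ≤ (Cφ : ℝ) * ε ^ (α : ℝ) := by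
    have := holderOnWith_dist_le hφH hzΩcl (frontier_subset_closure hyF) hdzy
    rwa [Real.dist_eq] at this
  have hφy : φ y = 0 := hφ0 y hyF
  have hφz : -((Cφ : ℝ) * ε ^ (α : ℝ)) ≤ φ z := by
    have h2 := neg_le_of_abs_le hH2
    rw [hφy] at h2
    linarith
  have hs1 := hsq _ hzζcl
  have hs2 := hsq z hzΩcl
  have hh1 := le_of_abs_le hH1
  nlinarith [mul_nonneg (NNReal.coe_nonneg Ch) hεα, mul_nonneg (NNReal.coe_nonneg Cφ) hεα]

end
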